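/- arXiv:1305.7372 — 8 statements merged into one kernel-verified Lean document; each statement's English description precedes it below -/
import Mathlib

section
/- For any $d \in \mathbb{N}$, $\Lambda > 0$, $\mu \in (0,1)$, there exists a constant $C = C(d,\Lambda,\mu) > 0$ such that: for every family of non-negative sequences $(a^k_\alpha)_{\alpha=0,\dots,d;\ k\in\mathbb{N}_0}$ satisfying $a^{k+1}_0 \le \Lambda$ and $a^{k+1}_\alpha \le \mu a^k_d + (1-\mu) a^k_{\alpha-1} + \Lambda$ for $\alpha = 1,\dots,d$ and all $k$, one has $\max_{0\le\alpha\le d} \limsup_{k\to\infty} a^k_\alpha \le C$. -/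
open Filter Finset Topology

/-- Iteration estimate for systems of sequences (Proposition 2.2): for `d ∈ ℕ`, `Λ > 0`,
`μ ∈ (0,1)`, there is `C = C(d,Λ,μ) > 0` such that any family of non-negative sequences
`a^k_α`, `α = 0,…,d`, with `a^{k+1}_0 ≤ Λ` and
`a^{k+1}_α ≤ μ a^k_d + (1-μ) a^k_{α-1} + Λ` for `1 ≤ α ≤ d`,
satisfies `limsup_k a^k_α ≤ C` for every `α ≤ d`. -/
theorem system_iteration (d : ℕ) (hd : 1 ≤ d) (Λ μ : ℝ) (hΛ : 0 < Λ)
    (hμ0 : 0 < μ) (hμ1 : μ < 1) :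
    ∃ C : ℝ, 0 < C ∧ ∀ a : ℕ → ℕ → ℝ,
      (∀ k α, α ≤ d → 0 ≤ a k α) →
      (∀ k, a (k + 1) 0 ≤ Λ) →
      (∀ k α, 1 ≤ α → α ≤ d → a (k + 1) α ≤ μ * a k d + (1 - μ) * a k (α - 1) + Λ) →
      ∀ α ≤ d, Filter.limsup (fun k => a k α) Filter.atTop ≤ C := by
  have hμ' : 0 < 1 - μ := by linarith
  set ε : ℝ := μ * (1 - μ) ^ d / 2 with hεdef
  have hεpos : 0 < ε := by positivity
  have hεlt : ε < μ := by
    have h1 : (1 - μ) ^ d < 1 := pow_lt_one₀ hμ'.le (by linarith) (by omega)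
    have : μ * (1 - μ) ^ d < μ * 1 := by
      exact mul_lt_mul_of_pos_left h1 hμ0
    simp only [hεdef]; linarith
  set s : ℝ := 1 - μ + ε with hsdef
  have hs0 : 0 < s := by simp only [hsdef]; linarith
  have hsgt : 1 - μ < s := by simp only [hsdef]; linarith
  have hs1 : s < 1 := by simp only [hsdef]; linarith
  -- key spectral inequality
  have hkey : s - μ * s ^ d < 1 - μ := by
    have hp : (1 - μ) ^ d ≤ s ^ d := pow_le_pow_left₀ hμ'.le hsgt.le d
    have hm : μ * (1 - μ) ^ d ≤ μ * s ^ d := mul_le_mul_of_nonneg_left hp hμ0.le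
    have h2ε : μ * (1 - μ) ^ d = 2 * ε := by simp only [hεdef]; ring
    simp only [hsdef]; linarith [hm, h2ε ▸ hm]
  set θ : ℝ := max ((1 - μ) / s) (μ * ∑ j ∈ range d, s ^ j) with hθdef
  have hθ0 : 0 < θ := lt_max_of_lt_left (div_pos hμ' hs0)
  have hθ1 : θ < 1 := by
    apply max_lt
    · rw [div_lt_one hs0]; linarith
    · have hGS : (∑ j ∈ range d, s ^ j) * (s - 1) = s ^ d - 1 := geom_sum_mul s d
      have hGS2 : μ * ((∑ j ∈ range d, s ^ j) * (s - 1)) = μ * (s ^ d - 1) := by rw [hGS]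
      nlinarith [hGS2, hkey, hs1]
  have hθs : 1 - μ ≤ θ * s := by
    have h : (1 - μ) / s ≤ θ := le_max_left _ _
    rw [div_le_iff₀ hs0] at h
    linarith [h]
  have hθsum : μ * ∑ j ∈ range d, s ^ j ≤ θ := le_max_right _ _
  set S : ℝ := ∑ i ∈ range (d + 1), s ^ (d - i) with hSdef
  have hSpos : 0 < S := by
    refine Finset.sum_pos (fun i _ => pow_pos hs0 _) ⟨0, mem_range.mpr (Nat.succ_pos d)⟩
  set c : ℝ := Λ * S with hcdef
  have hc : 0 < c := mul_pos hΛ hSpos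
  have h1θ : 0 < 1 - θ := by linarith
  refine ⟨c / (1 - θ) / s ^ d, by positivity, ?_⟩
  intro a ha h0 hrec α hα
  set b : ℕ → ℝ := fun k => ∑ i ∈ range (d + 1), s ^ (d - i) * a k i with hbdef
  have hbnn : ∀ k, 0 ≤ b k := fun k =>
    Finset.sum_nonneg fun i hi =>
      mul_nonneg (pow_nonneg hs0.le _) (ha k i (by simpa using Nat.lt_succ_iff.mp (mem_range.mp hi)))
  -- one-step estimate
  have hstep : ∀ k, b (k + 1) ≤ θ * b k + c := by
    intro k
    have hexp : b (k + 1) =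
        (∑ i ∈ range d, s ^ (d - (i + 1)) * a (k + 1) (i + 1)) + s ^ (d - 0) * a (k + 1) 0 :=
      Finset.sum_range_succ' _ d
    have hT1 : ∑ i ∈ range d, s ^ (d - (i + 1)) = ∑ j ∈ range d, s ^ j := by
      rw [← Finset.sum_range_reflect (fun j => s ^ j) d]
      exact Finset.sum_congr rfl fun i hi => by
        congr 1; omega
    have step1 : b (k + 1) ≤
        (∑ i ∈ range d, s ^ (d - (i + 1)) * (μ * a k d + (1 - μ) * a k i + Λ))
          + s ^ (d - 0) * Λ := by
      rw [hexp]
      refine add_le_add (Finset.sum_le_sum fun i hi => ?_)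
        (mul_le_mul_of_nonneg_left (h0 k) (pow_nonneg hs0.le _))
      have hi' := mem_range.mp hi
      have := hrec k (i + 1) (by omega) (by omega)
      simpa using mul_le_mul_of_nonneg_left this (pow_nonneg hs0.le (d - (i + 1)))
    have split : (∑ i ∈ range d, s ^ (d - (i + 1)) * (μ * a k d + (1 - μ) * a k i + Λ))
        = μ * a k d * (∑ i ∈ range d, s ^ (d - (i + 1)))
          + (∑ i ∈ range d, (1 - μ) * (s ^ (d - (i + 1)) * a k i))
          + Λ * (∑ i ∈ range d, s ^ (d - (i + 1))) := by
      rw [Finset.mul_sum, Finset.mul_sum, ← Finset.sum_add_distrib, ← Finset.sum_add_distrib]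
      exact Finset.sum_congr rfl fun i _ => by ring
    -- bound the a k d part
    have hpart1 : μ * a k d * (∑ i ∈ range d, s ^ (d - (i + 1))) ≤ θ * (s ^ (d - d) * a k d) := by
      rw [hT1]
      have hnn := ha k d le_rfl
      have : μ * (∑ j ∈ range d, s ^ j) * a k d ≤ θ * a k d :=
        mul_le_mul_of_nonneg_right hθsum hnn
      calc μ * a k d * (∑ j ∈ range d, s ^ j) = μ * (∑ j ∈ range d, s ^ j) * a k d := by ring
        _ ≤ θ * a k d := this
        _ = θ * (s ^ (d - d) * a k d) := by simp
    -- bound the shifted part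
    have hpart2 : (∑ i ∈ range d, (1 - μ) * (s ^ (d - (i + 1)) * a k i))
        ≤ θ * ∑ i ∈ range d, s ^ (d - i) * a k i := by
      rw [Finset.mul_sum]
      refine Finset.sum_le_sum fun i hi => ?_
      have hi' := mem_range.mp hi
      have hpow : s ^ (d - (i + 1)) * s = s ^ (d - i) := by
        rw [← pow_succ]; congr 1; omega
      have hnn := ha k i (by omega)
      calc (1 - μ) * (s ^ (d - (i + 1)) * a k i)
          ≤ (θ * s) * (s ^ (d - (i + 1)) * a k i) := by
            exact mul_le_mul_of_nonneg_right hθs (mul_nonneg (pow_nonneg hs0.le _) hnn)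
        _ = θ * (s ^ (d - i) * a k i) := by rw [← hpow]; ring
    -- Λ part
    have hpart3 : Λ * (∑ i ∈ range d, s ^ (d - (i + 1))) + s ^ (d - 0) * Λ = c := by
      rw [hcdef, hSdef, Finset.sum_range_succ' (fun i => s ^ (d - i)) d]
      ring
    have hbk : (∑ i ∈ range d, s ^ (d - i) * a k i) + s ^ (d - d) * a k d = b k :=
      (Finset.sum_range_succ (fun i => s ^ (d - i) * a k i) d).symm
    calc b (k + 1)
        ≤ (∑ i ∈ range d, s ^ (d - (i + 1)) * (μ * a k d + (1 - μ) * a k i + Λ))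
            + s ^ (d - 0) * Λ := step1
      _ = μ * a k d * (∑ i ∈ range d, s ^ (d - (i + 1)))
            + (∑ i ∈ range d, (1 - μ) * (s ^ (d - (i + 1)) * a k i))
            + (Λ * (∑ i ∈ range d, s ^ (d - (i + 1))) + s ^ (d - 0) * Λ) := by
          rw [split]; ring
      _ ≤ θ * (s ^ (d - d) * a k d) + θ * (∑ i ∈ range d, s ^ (d - i) * a k i) + c := by
          rw [hpart3]; linarith [hpart1, hpart2]
      _ = θ * ((∑ i ∈ range d, s ^ (d - i) * a k i) + s ^ (d - d) * a k d) + c := by ring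
      _ = θ * b k + c := by rw [hbk]
  -- iterate
  have hiter : ∀ k, b k ≤ θ ^ k * b 0 + c / (1 - θ) := by
    intro k
    induction k with
    | zero => simp; positivity
    | succ n ih =>
      have h1 : b (n + 1) ≤ θ * b n + c := hstep n
      have h2 : θ * b n ≤ θ * (θ ^ n * b 0 + c / (1 - θ)) :=
        mul_le_mul_of_nonneg_left ih hθ0.le
      have h3 : θ * (c / (1 - θ)) + c = c / (1 - θ) := by
        field_simp; ring
      calc b (n + 1) ≤ θ * (θ ^ n * b 0 + c / (1 - θ)) + c := by linarith
        _ = θ ^ (n + 1) * b 0 + (θ * (c / (1 - θ)) + c) := by ring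
        _ = θ ^ (n + 1) * b 0 + c / (1 - θ) := by rw [h3]
  -- pointwise bound for a k α
  have hak : ∀ k, a k α ≤ (θ ^ k * b 0 + c / (1 - θ)) / s ^ d := by
    intro k
    have h1 : s ^ d ≤ s ^ (d - α) := pow_le_pow_of_le_one hs0.le hs1.le (Nat.sub_le d α)
    have hnn := ha k α hα
    have h2 : s ^ d * a k α ≤ s ^ (d - α) * a k α := mul_le_mul_of_nonneg_right h1 hnn
    have h3 : s ^ (d - α) * a k α ≤ b k := by
      refine Finset.single_le_sum (f := fun i => s ^ (d - i) * a k i)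
        (fun i hi => mul_nonneg (pow_nonneg hs0.le _)
          (ha k i (by simpa using Nat.lt_succ_iff.mp (mem_range.mp hi))))
        (mem_range.mpr (by omega))
    have h4 : s ^ d * a k α ≤ θ ^ k * b 0 + c / (1 - θ) := le_trans (le_trans h2 h3) (hiter k)
    rw [le_div_iff₀ (pow_pos hs0 d)]
    linarith [h4]
  -- limsup argument
  have htend : Tendsto (fun k => (θ ^ k * b 0 + c / (1 - θ)) / s ^ d) atTop
      (𝓝 (c / (1 - θ) / s ^ d)) := by
    have h3 : Tendsto (fun k : ℕ => θ ^ k) atTop (𝓝 0) :=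
      tendsto_pow_atTop_nhds_zero_of_lt_one hθ0.le hθ1
    have := ((h3.mul_const (b 0)).add_const (c / (1 - θ))).div_const (s ^ d)
    simpa using this
  have hls : Filter.limsup (fun k => (θ ^ k * b 0 + c / (1 - θ)) / s ^ d) atTop
      = c / (1 - θ) / s ^ d := htend.limsup_eq
  calc Filter.limsup (fun k => a k α) atTop
      ≤ Filter.limsup (fun k => (θ ^ k * b 0 + c / (1 - θ)) / s ^ d) atTop := by
        refine Filter.limsup_le_limsup (Eventually.of_forall hak) ?_ ?_
        · exact Filter.isCoboundedUnder_le_of_le atTop (fun k => ha k α hα)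
        · exact htend.isBoundedUnder_le
    _ = c / (1 - θ) / s ^ d := hls
end

section
/- Given $\mu \in (0,1)$ and $C > 0$, for any $\delta > 0$, set $K = \lceil 2C/\delta \rceil + 2$. If a finite strictly binary tree $T$ satisfies $\sum_{t \notin \mathrm{leaf}(T)} \mu^{l(t)}(1-\mu)^{r(t)} \le C + C\sum_{t \in \mathrm{leaf}(T)} \mu^{l(t)}(1-\mu)^{r(t)}$ and has depth $d(T) \ge K$, then $\sum_{t: d(t)=d(T)} \mu^{l(t)}(1-\mu)^{r(t)} \le \delta$. -/
open scoped Classical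

/-- A finite strictly binary tree, encoded by the finite set of root-to-node paths
(`false` = left turn, `true` = right turn). The empty path is the root, the set of
paths is closed under taking parents, and children always come in (left,right)
pairs, i.e. every node has zero or exactly two children. -/
structure BinTree where
  nodes : Finset (List Bool)
  root_mem : ([] : List Bool) ∈ nodes
  parent_mem : ∀ (t : List Bool) (b : Bool), t ++ [b] ∈ nodes → t ∈ nodes
  sibling_mem : ∀ (t : List Bool) (b : Bool), t ++ [b] ∈ nodes → t ++ [!b] ∈ nodes

namespace BinTree

/-- A node is a leaf if it has no children. -/
def IsLeaf (T : BinTree) (t : List Bool) : Prop :=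
  t ∈ T.nodes ∧ ∀ b : Bool, t ++ [b] ∉ T.nodes

/-- The weight `μ^{l(t)} (1-μ)^{r(t)}` of a node, where `l(t)` and `r(t)` are the
numbers of left and right turns on the path from the root to `t`. -/
noncomputable def weight (μ : ℝ) (t : List Bool) : ℝ :=
  μ ^ (t.count false) * (1 - μ) ^ (t.count true)

/-- The maximal depth `d(T)` of the tree. -/
def depth (T : BinTree) : ℕ := T.nodes.sup List.length

/-- `a_i`: the total weight of all nodes at depth `i`. -/
noncomputable def layerSum (T : BinTree) (μ : ℝ) (i : ℕ) : ℝ :=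
  ∑ t ∈ T.nodes.filter (fun t => t.length = i), weight μ t

/-- `b_i`: the total weight of all leaves at depth `i`. -/
noncomputable def leafLayerSum (T : BinTree) (μ : ℝ) (i : ℕ) : ℝ :=
  ∑ t ∈ T.nodes.filter (fun t => t.length = i ∧ T.IsLeaf t), weight μ t

/-- The total weight of all leaves. -/
noncomputable def leafSum (T : BinTree) (μ : ℝ) : ℝ :=
  ∑ t ∈ T.nodes.filter (fun t => T.IsLeaf t), weight μ t

/-- The total weight of all interior (non-leaf) nodes. -/
noncomputable def nonleafSum (T : BinTree) (μ : ℝ) : ℝ :=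
  ∑ t ∈ T.nodes.filter (fun t => ¬ T.IsLeaf t), weight μ t

end BinTree

namespace BinTree

lemma weight_nonneg {μ : ℝ} (hμ0 : 0 ≤ μ) (hμ1 : μ ≤ 1) (t : List Bool) :
    0 ≤ weight μ t :=
  mul_nonneg (pow_nonneg hμ0 _) (pow_nonneg (by linarith) _)

lemma layerSum_nonneg (T : BinTree) {μ : ℝ} (hμ0 : 0 ≤ μ) (hμ1 : μ ≤ 1) (i : ℕ) :
    0 ≤ T.layerSum μ i :=
  Finset.sum_nonneg fun t _ => weight_nonneg hμ0 hμ1 t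

lemma weight_append (μ : ℝ) (t : List Bool) (b : Bool) :
    weight μ (t ++ [b]) = weight μ t * (bif b then (1 - μ) else μ) := by
  cases b <;> simp [weight, List.count_append, pow_succ] <;> ring

/-- the key recursion: `a_{i+1}` equals the sum of weights of non-leaf nodes at depth `i`. -/
lemma layerSum_succ (T : BinTree) (μ : ℝ) (i : ℕ) :
    T.layerSum μ (i + 1) =
      ∑ t ∈ T.nodes.filter (fun t => t.length = i ∧ ¬ T.IsLeaf t), weight μ t := by
  classical
  set S := T.nodes.filter (fun t => t.length = i ∧ ¬ T.IsLeaf t) with hS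
  have hchild : ∀ t ∈ S, ∀ b : Bool, t ++ [b] ∈ T.nodes := by
    intro t ht b
    simp only [hS, Finset.mem_filter] at ht
    obtain ⟨htn, hlen, hnl⟩ := ht
    rw [IsLeaf] at hnl
    push_neg at hnl
    obtain ⟨b', hb'⟩ := hnl htn
    cases b' <;> cases b <;> first
      | exact hb'
      | simpa using T.sibling_mem _ _ hb'
  have step1 : T.layerSum μ (i + 1) =
      ∑ p ∈ S ×ˢ (Finset.univ : Finset Bool), weight μ (p.1 ++ [p.2]) := by
    rw [layerSum]
    refine Finset.sum_bij' (fun s hs => (s.dropLast, s.getLast ?_))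
      (fun p _ => p.1 ++ [p.2]) ?_ ?_ ?_ ?_ ?_
    · simp only [Finset.mem_filter] at hs
      intro h
      simp [h] at hs
    · intro s hs
      simp only [Finset.mem_filter] at hs
      obtain ⟨hsn, hslen⟩ := hs
      have hne : s ≠ [] := by intro h; simp [h] at hslen
      have hrec : s.dropLast ++ [s.getLast hne] = s := List.dropLast_append_getLast hne
      simp only [Finset.mem_product, Finset.mem_univ, and_true, hS, Finset.mem_filter]
      refine ⟨T.parent_mem _ _ (by rw [hrec]; exact hsn), ?_, ?_⟩
      · simp [List.length_dropLast, hslen]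
      · rw [IsLeaf]; push_neg
        intro _
        exact ⟨s.getLast hne, by rw [hrec]; exact hsn⟩
    · intro p hp
      simp only [Finset.mem_product, Finset.mem_univ, and_true] at hp
      simp only [Finset.mem_filter]
      have hlen : p.1.length = i := by
        simp only [hS, Finset.mem_filter] at hp; exact hp.2.1
      exact ⟨hchild p.1 hp p.2, by simp [hlen]⟩
    · intro s hs
      simp only [Finset.mem_filter] at hs
      have hne : s ≠ [] := by intro h; simp [h] at hs
      exact List.dropLast_append_getLast hne
    · intro p hp; simp
    · intro s hs
      simp only [Finset.mem_filter] at hs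
      have hne : s ≠ [] := by intro h; simp [h] at hs
      conv_lhs => rw [← List.dropLast_append_getLast hne]
  rw [step1, Finset.sum_product]
  refine Finset.sum_congr rfl fun t ht => ?_
  rw [Fintype.sum_bool, weight_append, weight_append]
  simp only [cond_true, cond_false]
  ring

lemma layerSum_split (T : BinTree) (μ : ℝ) (i : ℕ) :
    T.layerSum μ i = T.leafLayerSum μ i + T.layerSum μ (i + 1) := by
  classical
  rw [layerSum_succ, layerSum, leafLayerSum]
  rw [← Finset.sum_filter_add_sum_filter_not (T.nodes.filter (fun t => t.length = i))
    (fun t => T.IsLeaf t)]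
  rw [Finset.filter_filter, Finset.filter_filter]

lemma layerSum_succ_le (T : BinTree) {μ : ℝ} (hμ0 : 0 ≤ μ) (hμ1 : μ ≤ 1) (i : ℕ) :
    T.layerSum μ (i + 1) ≤ T.layerSum μ i := by
  rw [layerSum_split T μ i]
  have : 0 ≤ T.leafLayerSum μ i :=
    Finset.sum_nonneg fun t _ => weight_nonneg hμ0 hμ1 t
  linarith

lemma layerSum_anti (T : BinTree) {μ : ℝ} (hμ0 : 0 ≤ μ) (hμ1 : μ ≤ 1) :
    Antitone (T.layerSum μ) :=
  antitone_nat_of_succ_le fun n => T.layerSum_succ_le hμ0 hμ1 n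

lemma layerSum_zero (T : BinTree) (μ : ℝ) : T.layerSum μ 0 = 1 := by
  classical
  rw [layerSum]
  have : T.nodes.filter (fun t => t.length = 0) = {([] : List Bool)} := by
    ext t
    simp only [Finset.mem_filter, Finset.mem_singleton, List.length_eq_zero_iff]
    constructor
    · rintro ⟨_, h⟩; exact h
    · rintro rfl; exact ⟨T.root_mem, rfl⟩
  rw [this, Finset.sum_singleton, weight]
  simp

lemma length_le_depth (T : BinTree) {t : List Bool} (ht : t ∈ T.nodes) :
    t.length ≤ T.depth :=
  Finset.le_sup ht

lemma nonleafSum_eq (T : BinTree) (μ : ℝ) :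
    T.nonleafSum μ = ∑ i ∈ Finset.range T.depth, T.layerSum μ (i + 1) := by
  classical
  rw [nonleafSum]
  rw [← Finset.sum_fiberwise_of_maps_to (g := List.length)
    (?_ : ∀ t ∈ T.nodes.filter (fun t => ¬ T.IsLeaf t),
      t.length ∈ Finset.range T.depth) (weight μ)]
  · refine Finset.sum_congr rfl fun i _ => ?_
    rw [layerSum_succ, Finset.filter_filter]
    refine Finset.sum_congr ?_ fun _ _ => rfl
    apply Finset.filter_congr
    intro t _
    simp [and_comm]
  · intro t ht
    simp only [Finset.mem_filter] at ht
    obtain ⟨htn, hnl⟩ := ht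
    rw [IsLeaf] at hnl
    push_neg at hnl
    obtain ⟨b, hb⟩ := hnl htn
    have := T.length_le_depth hb
    simp only [List.length_append, List.length_singleton] at this
    simp only [Finset.mem_range]
    omega

lemma leafSum_eq (T : BinTree) (μ : ℝ) :
    T.leafSum μ = ∑ i ∈ Finset.range (T.depth + 1), T.leafLayerSum μ i := by
  classical
  rw [leafSum]
  rw [← Finset.sum_fiberwise_of_maps_to (g := List.length)
    (?_ : ∀ t ∈ T.nodes.filter (fun t => T.IsLeaf t),
      t.length ∈ Finset.range (T.depth + 1)) (weight μ)]
  · refine Finset.sum_congr rfl fun i _ => ?_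
    rw [leafLayerSum, Finset.filter_filter]
    refine Finset.sum_congr ?_ fun _ _ => rfl
    apply Finset.filter_congr
    intro t _
    simp [and_comm]
  · intro t ht
    simp only [Finset.mem_filter] at ht
    have := T.length_le_depth ht.1
    simp only [Finset.mem_range]
    omega

lemma sum_leafLayer (T : BinTree) (μ : ℝ) (n : ℕ) :
    ∑ i ∈ Finset.range n, T.leafLayerSum μ i = 1 - T.layerSum μ n := by
  induction n with
  | zero => simp [T.layerSum_zero μ]
  | succ n ih =>
    rw [Finset.sum_range_succ, ih]
    have := T.layerSum_split μ n
    linarith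

lemma leafSum_le_one (T : BinTree) {μ : ℝ} (hμ0 : 0 ≤ μ) (hμ1 : μ ≤ 1) :
    T.leafSum μ ≤ 1 := by
  rw [T.leafSum_eq μ, T.sum_leafLayer μ (T.depth + 1)]
  have := T.layerSum_nonneg hμ0 hμ1 (T.depth + 1)
  linarith

end BinTree

/-- Sparsity estimate for game trees (Proposition 3.1): if
`∑_{t ∉ leaf T} μ^{l(t)}(1-μ)^{r(t)} ≤ C + C ∑_{t ∈ leaf T} μ^{l(t)}(1-μ)^{r(t)}`
and the depth of `T` is at least `K = ⌈2C/δ⌉ + 2`, then the total weight of the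
nodes at maximal depth is at most `δ`. -/
theorem sparsity (μ C δ : ℝ) (hμ0 : 0 < μ) (hμ1 : μ < 1) (hC : 0 < C) (hδ : 0 < δ)
    (T : BinTree)
    (hsum : T.nonleafSum μ ≤ C + C * T.leafSum μ)
    (hdepth : ⌈2 * C / δ⌉₊ + 2 ≤ T.depth) :
    T.layerSum μ T.depth ≤ δ := by
  set d := T.depth with hd
  have hμ0' : (0:ℝ) ≤ μ := hμ0.le
  have hμ1' : μ ≤ 1 := hμ1.le
  have hdpos : 0 < d := by omega
  have had : 0 ≤ T.layerSum μ d := T.layerSum_nonneg hμ0' hμ1' d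
  have key : (d : ℝ) * T.layerSum μ d ≤ 2 * C := by
    have h1 : (d : ℝ) * T.layerSum μ d ≤ ∑ i ∈ Finset.range d, T.layerSum μ (i + 1) := by
      calc (d : ℝ) * T.layerSum μ d
          = ∑ _i ∈ Finset.range d, T.layerSum μ d := by
            rw [Finset.sum_const, Finset.card_range, nsmul_eq_mul]
        _ ≤ ∑ i ∈ Finset.range d, T.layerSum μ (i + 1) :=
            Finset.sum_le_sum fun i hi => T.layerSum_anti hμ0' hμ1'
              (by simp only [Finset.mem_range] at hi; omega)
    have h2 : T.nonleafSum μ ≤ 2 * C := by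
      have := T.leafSum_le_one hμ0' hμ1'
      nlinarith
    rw [← T.nonleafSum_eq μ] at h1
    linarith
  have hdge : 2 * C / δ ≤ (d : ℝ) := by
    calc 2 * C / δ ≤ (⌈2 * C / δ⌉₊ : ℝ) := Nat.le_ceil _
      _ ≤ (d : ℝ) := by exact_mod_cast le_trans (by omega) hdepth
  have hdpos' : (0:ℝ) < d := by exact_mod_cast hdpos
  have h2C : 2 * C ≤ δ * d := by
    rw [div_le_iff₀ hδ] at hdge
    linarith
  nlinarith
end

section
/- Let $X$ be a set, $Y \subsetneq X$ nonempty with $X \setminus Y$ nonempty, and for each $x \in Y$ a nonempty set $B(x) \subseteq X$ such that every $x \in Y$ can be connected to $X \setminus Y$ by a chain of length at most $d$ through the sets $B(\cdot)$. Let $\mu \in (0,1)$, $\Lambda > 0$. Suppose $u_k: X \to \mathbb{R}$, $k \in \mathbb{N}_0$, satisfy $\sup_X u_0 < \infty$, and $u_{k+1}(x) \le \mu \sup_X u_k + (1-\mu)\inf_{B(x)} u_k + \Lambda$ for $x \in Y$, $u_{k+1}(x) \le \Lambda$ for $x \in X \setminus Y$. Then there is a constant $C = C(\mu,\Lambda,d)$,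 independent of $u_0$, with $\limsup_{k\to\infty} \sup_X u_k \le C$. -/
/-- Boundedness of the iteration (Theorem 3.1(i)): in an admissible setup of
"diameter" `d`, there is a constant `C = C(μ,Λ,d)`, independent of the setup and
of `u₀`, bounding `limsup_k sup_X u_k` for any sequence satisfying the
subsolution-type iteration inequalities. -/
theorem boundedness_iteration (μ Λ : ℝ) (hμ0 : 0 < μ) (hμ1 : μ < 1) (hΛ : 0 < Λ)
    (d : ℕ) :
    ∃ C : ℝ, 0 < C ∧ ∀ (X : Type) (Y : Set X) (B : X → Set X),
      Y.Nonempty → Yᶜ.Nonempty → (∀ x ∈ Y, (B x).Nonempty) →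
      (∀ x ∈ Y, ∃ m < d, ∃ c : ℕ → X, c 0 = x ∧ c m ∉ Y ∧
        ∀ i, 1 ≤ i → i ≤ m → c i ∈ B (c (i - 1))) →
      ∀ u : ℕ → X → ℝ,
        BddAbove (Set.range (u 0)) →
        (∀ k, ∀ x ∈ Y,
          u (k + 1) x ≤ μ * sSup (Set.range (u k)) + (1 - μ) * sInf (u k '' B x) + Λ) →
        (∀ k, ∀ x ∉ Y, u (k + 1) x ≤ Λ) →
        Filter.limsup (fun k => sSup (Set.range (u k))) Filter.atTop ≤ C := by
  have h1μ : (0:ℝ) < 1 - μ := by linarith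
  have hpow : (0:ℝ) < (1 - μ) ^ d := pow_pos h1μ d
  have hpow1 : (1 - μ) ^ d ≤ 1 := pow_le_one₀ h1μ.le (by linarith)
  set C : ℝ := Λ / (μ * (1 - μ) ^ d) with hCdef
  have hCpos : 0 < C := div_pos hΛ (mul_pos hμ0 hpow)
  refine ⟨C, hCpos, ?_⟩
  intro X Y B hYne hYcne hBne hchain u hbdd0 hIterY hIterYc
  rcases Nat.eq_zero_or_pos d with hd0 | hd
  · obtain ⟨y, hy⟩ := hYne
    obtain ⟨m, hm, -⟩ := hchain y hy
    omega
  obtain ⟨y0, hy0⟩ := hYne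
  set S : ℕ → ℝ := fun k => sSup (Set.range (u k)) with hSdef
  set V : ℕ → ℝ := fun k => max (S k) 0 with hVdef
  have hXne : ∀ k, (Set.range (u k)).Nonempty := fun k => ⟨u k y0, y0, rfl⟩
  have hΛK : Λ ≤ Λ / μ := by
    rw [le_div_iff₀ hμ0]; nlinarith
  have hKpos : 0 < Λ / μ := div_pos hΛ hμ0
  -- boundedness above of each u k
  have hA : ∀ k, BddAbove (Set.range (u k)) := by
    intro k
    induction k with
    | zero => exact hbdd0
    | succ k ih =>
      refine ⟨max (S k) 0 + Λ, ?_⟩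
      rintro _ ⟨x, rfl⟩
      have hM0 : (0:ℝ) ≤ max (S k) 0 := le_max_right _ _
      by_cases hx : x ∈ Y
      · have h1 := hIterY k x hx
        have hsup : S k ≤ max (S k) 0 := le_max_left _ _
        have hinf : sInf (u k '' B x) ≤ max (S k) 0 := by
          by_cases hbb : BddBelow (u k '' B x)
          · obtain ⟨b, hb⟩ := hBne x hx
            have hub : u k b ≤ S k := le_csSup ih ⟨b, rfl⟩
            exact le_trans (csInf_le hbb ⟨b, hb, rfl⟩) (le_trans hub hsup)
          · rw [Real.sInf_of_not_bddBelow hbb]; exact hM0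
        have h2 : μ * S k ≤ μ * max (S k) 0 :=
          mul_le_mul_of_nonneg_left hsup hμ0.le
        have h3 : (1 - μ) * sInf (u k '' B x) ≤ (1 - μ) * max (S k) 0 :=
          mul_le_mul_of_nonneg_left hinf h1μ.le
        have hSk : sSup (Set.range (u k)) = S k := rfl
        nlinarith
      · have h1 := hIterYc k x hx
        linarith
  have hBle : ∀ k x, u k x ≤ S k := fun k x => le_csSup (hA k) ⟨x, rfl⟩
  -- the chain estimate
  have lemC : ∀ (W : ℝ), 0 ≤ W → ∀ (m : ℕ) (c : ℕ → X), c m ∉ Y →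
      (∀ i, 1 ≤ i → i ≤ m → c i ∈ B (c (i - 1))) →
      ∀ (t0 : ℕ), 1 ≤ t0 → (∀ s, t0 ≤ s → s < t0 + m → S s ≤ W) →
      ∀ j, j ≤ m → u (t0 + j) (c (m - j)) ≤ (1 - (1 - μ) ^ j) * W + Λ / μ := by
    intro W hW m c hcm hcB t0 ht0 hSW j
    induction j with
    | zero =>
      intro _
      simp only [Nat.sub_zero, pow_zero, sub_self, zero_mul, zero_add]
      obtain ⟨t1, rfl⟩ : ∃ t1, t0 = t1 + 1 := ⟨t0 - 1, by omega⟩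
      exact le_trans (hIterYc t1 (c m) hcm) hΛK
    | succ j ih =>
      intro hjm
      have hj : j ≤ m := by omega
      have ihv := ih hj
      have hpj0 : (0:ℝ) ≤ (1 - μ) ^ j := pow_nonneg h1μ.le j
      have hpj1 : (1 - μ) ^ j ≤ 1 := pow_le_one₀ h1μ.le (by linarith)
      have hpj10 : (0:ℝ) ≤ (1 - μ) ^ (j+1) := pow_nonneg h1μ.le _
      have hpj11 : (1 - μ) ^ (j+1) ≤ 1 := pow_le_one₀ h1μ.le (by linarith)
      have hihnn : 0 ≤ (1 - (1 - μ) ^ j) * W + Λ / μ := by nlinarith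
      by_cases hx : c (m - (j+1)) ∈ Y
      · have hmem : c (m - j) ∈ B (c (m - (j+1))) := by
          have h1 : 1 ≤ m - j := by omega
          have heq : m - j - 1 = m - (j+1) := by omega
          have := hcB (m - j) h1 (by omega)
          rwa [heq] at this
        have h1 := hIterY (t0 + j) _ hx
        have hSb : S (t0 + j) ≤ W := hSW _ (by omega) (by omega)
        have hinf : sInf (u (t0+j) '' B (c (m-(j+1)))) ≤ (1 - (1 - μ) ^ j) * W + Λ / μ := by
          by_cases hbb : BddBelow (u (t0+j) '' B (c (m-(j+1))))
          · exact le_trans (csInf_le hbb ⟨c (m-j), hmem, rfl⟩) ihv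
          · rw [Real.sInf_of_not_bddBelow hbb]; exact hihnn
        have h2 : μ * sSup (Set.range (u (t0 + j))) ≤ μ * W :=
          mul_le_mul_of_nonneg_left hSb hμ0.le
        have h3 : (1 - μ) * sInf (u (t0+j) '' B (c (m-(j+1)))) ≤
            (1 - μ) * ((1 - (1 - μ) ^ j) * W + Λ / μ) :=
          mul_le_mul_of_nonneg_left hinf h1μ.le
        have hkey : μ * W + (1 - μ) * ((1 - (1 - μ) ^ j) * W + Λ / μ) + Λ
            = (1 - (1 - μ) ^ (j+1)) * W + Λ / μ := by
          rw [pow_succ]; field_simp; ring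
        calc u (t0 + (j+1)) (c (m - (j+1)))
            ≤ μ * sSup (Set.range (u (t0 + j))) +
              (1 - μ) * sInf (u (t0+j) '' B (c (m-(j+1)))) + Λ := h1
          _ ≤ μ * W + (1 - μ) * ((1 - (1 - μ) ^ j) * W + Λ / μ) + Λ := by linarith
          _ = (1 - (1 - μ) ^ (j+1)) * W + Λ / μ := hkey
      · have h1 := hIterYc (t0 + j) _ hx
        have : Λ ≤ (1 - (1 - μ) ^ (j+1)) * W + Λ / μ := by nlinarith
        exact le_trans h1 this
  -- window recursion
  have lemD : ∀ (W : ℝ), 0 ≤ W → ∀ n, d ≤ n →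
      (∀ s, n - d ≤ s → s < n → S s ≤ W) →
      V n ≤ (1 - (1 - μ) ^ d) * W + Λ / μ := by
    intro W hW n hn hwin
    have hRHS0 : 0 ≤ (1 - (1 - μ) ^ d) * W + Λ / μ := by nlinarith
    refine max_le ?_ hRHS0
    refine csSup_le (hXne n) ?_
    rintro _ ⟨x, rfl⟩
    by_cases hx : x ∈ Y
    · obtain ⟨m, hmd, c, hc0, hcm, hcB⟩ := hchain x hx
      have hm1 : 1 ≤ m := by
        by_contra h
        have hm0 : m = 0 := by omega
        rw [hm0, hc0] at hcm
        exact hcm hx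
      have ht01 : 1 ≤ n - m := by omega
      have ht0m : n - m + m = n := by omega
      have hch := lemC W hW m c hcm hcB (n - m) ht01
        (fun s hs1 hs2 => hwin s (by omega) (by omega)) m le_rfl
      rw [Nat.sub_self, ht0m, hc0] at hch
      have hmono : (1 - μ) ^ d ≤ (1 - μ) ^ m :=
        pow_le_pow_of_le_one h1μ.le (by linarith) (by omega)
      nlinarith
    · have h1 : u n x ≤ Λ := by
        obtain ⟨n1, rfl⟩ : ∃ n1, n = n1 + 1 := ⟨n - 1, by omega⟩
        exact hIterYc n1 x hx
      nlinarith
  set α : ℝ := 1 - (1 - μ) ^ d with hαdef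
  have hα0 : 0 < α := by
    have : (1 - μ) ^ d < 1 := pow_lt_one₀ h1μ.le (by linarith) (by omega)
    simp only [hαdef]; linarith
  have h1α : 0 < 1 - α := by simp only [hαdef]; linarith
  have hCK : C = (Λ / μ) / (1 - α) := by
    simp only [hCdef, hαdef]
    field_simp
    ring
  -- global bound
  have hdne : (Finset.range d).Nonempty := Finset.nonempty_range_iff.mpr (by omega)
  set R : ℝ := max C ((Finset.range d).sup' hdne V) with hRdef
  have hVR : ∀ n, V n ≤ R := by
    intro n
    induction n using Nat.strong_induction_on with
    | _ n ih =>
      by_cases hn : n < d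
      · exact le_trans (Finset.le_sup' V (Finset.mem_range.mpr hn)) (le_max_right _ _)
      · push_neg at hn
        have hR0 : (0:ℝ) ≤ R := le_trans hCpos.le (le_max_left _ _)
        have hD := lemD R hR0 n hn
          (fun s hs1 hs2 => le_trans (le_max_left _ _) (ih s (by omega)))
        have hCle : C ≤ R := le_max_left _ _
        have hKC : (1 - α) * C = Λ / μ := by
          rw [hCK]; field_simp
        have hKR : Λ / μ ≤ (1 - α) * R := by
          rw [← hKC]; exact mul_le_mul_of_nonneg_left hCle h1α.le
        linarith
  -- limsup argument
  set sV : Set ℝ := {a | ∀ᶠ n in Filter.atTop, V n ≤ a} with hsVdef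
  have hRV : R ∈ sV := Filter.Eventually.of_forall hVR
  have hsVne : sV.Nonempty := ⟨R, hRV⟩
  have hsVbdd : BddBelow sV := by
    refine ⟨0, fun a ha => ?_⟩
    obtain ⟨n, hn⟩ := ha.exists
    exact le_trans (le_max_right _ _) hn
  set L : ℝ := sInf sV with hLdef
  have hL0 : 0 ≤ L := by
    refine le_csInf hsVne (fun a ha => ?_)
    obtain ⟨n, hn⟩ := ha.exists
    exact le_trans (le_max_right _ _) hn
  have key : ∀ ε > (0:ℝ), ∀ᶠ n in Filter.atTop, V n ≤ α * (L + ε) + Λ / μ := by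
    intro ε hε
    obtain ⟨a, ha, haLε⟩ := exists_lt_of_csInf_lt hsVne (by linarith : sInf sV < L + ε)
    rw [hsVdef, Set.mem_setOf_eq, Filter.eventually_atTop] at ha
    obtain ⟨N, hN⟩ := ha
    rw [Filter.eventually_atTop]
    refine ⟨N + d, fun n hn => ?_⟩
    have hD := lemD (L + ε) (by linarith) n (by omega)
      (fun s hs1 hs2 =>
        le_trans (le_max_left _ _) (le_trans (hN s (by omega)) haLε.le))
    exact hD
  have hLle : ∀ ε > (0:ℝ), L ≤ α * (L + ε) + Λ / μ :=
    fun ε hε => csInf_le hsVbdd (key ε hε)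
  have hLαK : L ≤ α * L + Λ / μ := by
    refine le_of_forall_pos_le_add (fun ε hε => ?_)
    have h1 := hLle (ε / α) (div_pos hε hα0)
    have h2 : α * (L + ε / α) = α * L + ε := by field_simp
    linarith
  have hLC : L ≤ C := by
    rw [hCK, le_div_iff₀ h1α]
    nlinarith
  have hfinal : ∀ ε > (0:ℝ), ∀ᶠ n in Filter.atTop, S n ≤ C + ε := by
    intro ε hε
    obtain ⟨a, ha, haLε⟩ := exists_lt_of_csInf_lt hsVne (by linarith : sInf sV < L + ε)
    rw [hsVdef, Set.mem_setOf_eq] at ha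
    filter_upwards [ha] with n hn
    have h1 : S n ≤ V n := le_max_left _ _
    linarith
  have hgoal : Filter.limsup S Filter.atTop ≤ C := by
    rw [Filter.limsup_eq]
    by_cases hbb : BddBelow {a | ∀ᶠ n in Filter.atTop, S n ≤ a}
    · refine le_of_forall_pos_le_add (fun ε hε => csInf_le hbb (hfinal ε hε))
    · rw [Real.sInf_of_not_bddBelow hbb]; exact hCpos.le
  exact hgoal
end

section
/- In the admissible setup with finite diameter $d$, let $\mu \in (0,1)$, $\Lambda > 0$. If $u: X \to \mathbb{R}$ satisfies $\sup_X u < \infty$, $u(x) \le \mu \sup_X u + (1-\mu)\inf_{B(x)} u + \Lambda$ for all $x \in Y$, and $u(x) \le \Lambda$ for $x \in X \setminus Y$, then $\sup_X u \le C$ for a constant $C$ depending only on $\mu$, $\Lambda$, $d$. -/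
/-- Boundedness of subsolutions (Theorem 3.1(ii)): in an admissible setup of
"diameter" `d`, any `u` with `sup_X u < ∞` satisfying
`u(x) ≤ μ sup_X u + (1-μ) inf_{B(x)} u + Λ` on `Y` and `u ≤ Λ` off `Y`
satisfies `sup_X u ≤ C` for a constant `C = C(μ,Λ,d)`. -/
theorem boundedness_subsolution (μ Λ : ℝ) (hμ0 : 0 < μ) (hμ1 : μ < 1) (hΛ : 0 < Λ)
    (d : ℕ) :
    ∃ C : ℝ, 0 < C ∧ ∀ (X : Type) (Y : Set X) (B : X → Set X),
      Y.Nonempty → Yᶜ.Nonempty → (∀ x ∈ Y, (B x).Nonempty) →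
      (∀ x ∈ Y, ∃ m < d, ∃ c : ℕ → X, c 0 = x ∧ c m ∉ Y ∧
        ∀ i, 1 ≤ i → i ≤ m → c i ∈ B (c (i - 1))) →
      ∀ u : X → ℝ,
        BddAbove (Set.range u) →
        (∀ x ∈ Y, u x ≤ μ * sSup (Set.range u) + (1 - μ) * sInf (u '' B x) + Λ) →
        (∀ x ∉ Y, u x ≤ Λ) →
        sSup (Set.range u) ≤ C := by
  have h1μ : 0 < 1 - μ := by linarith
  have hC : 0 < Λ / (μ * (1 - μ) ^ d) :=
    div_pos hΛ (mul_pos hμ0 (pow_pos h1μ d))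
  refine ⟨Λ / (μ * (1 - μ) ^ d), hC, ?_⟩
  intro X Y B hY hYc hB hchain u hbdd hsub hout
  set M := sSup (Set.range u) with hM
  obtain ⟨y0, hy0⟩ := hY
  have hne : (Set.range u).Nonempty := ⟨u y0, ⟨y0, rfl⟩⟩
  have hle : ∀ x, u x ≤ M := fun x => le_csSup hbdd ⟨x, rfl⟩
  have hΛμ : Λ ≤ Λ / μ := by
    rw [le_div_iff₀ hμ0]; nlinarith
  by_cases hM0 : M ≤ 0
  · linarith
  push_neg at hM0
  have hM0' : 0 ≤ M := hM0.le
  -- key induction along chains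
  have key : ∀ m : ℕ, ∀ c : ℕ → X, c m ∉ Y →
      (∀ i, 1 ≤ i → i ≤ m → c i ∈ B (c (i - 1))) →
      u (c 0) ≤ (1 - (1 - μ) ^ m) * M + Λ / μ := by
    intro m
    induction m with
    | zero =>
      intro c hc _
      have := hout _ hc
      simp only [pow_zero]
      linarith
    | succ m ih =>
      intro c hcm hch
      have hpow : (1 - μ) ^ (m + 1) ≤ 1 - μ := by
        calc (1 - μ) ^ (m + 1) ≤ (1 - μ) ^ 1 :=
              pow_le_pow_of_le_one h1μ.le (by linarith) (by omega)
          _ = 1 - μ := pow_one _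
      have hpow0 : 0 < (1 - μ) ^ (m + 1) := pow_pos h1μ _
      by_cases hc0 : c 0 ∈ Y
      · have h1 : c 1 ∈ B (c 0) := by
          simpa using hch 1 le_rfl (by omega)
        have ih1 : u (c 1) ≤ (1 - (1 - μ) ^ m) * M + Λ / μ := by
          apply ih (fun k => c (k + 1))
          · simpa using hcm
          · intro i h1i him
            have h := hch (i + 1) (by omega) (by omega)
            have e : i + 1 - 1 = i := by omega
            rw [e] at h
            have e2 : i - 1 + 1 = i := by omega
            simpa [e2] using h
        have hsub0 := hsub _ hc0
        have hps : (1 - μ) ^ (m + 1) = (1 - μ) * (1 - μ) ^ m := by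
          rw [pow_succ]; ring
        have hdiv : (1 - μ) * (Λ / μ) + Λ = Λ / μ := by
          field_simp; ring
        by_cases hbb : BddBelow (u '' B (c 0))
        · have hi : sInf (u '' B (c 0)) ≤ u (c 1) := csInf_le hbb ⟨c 1, h1, rfl⟩
          have hmul : (1 - μ) * u (c 1) ≤ (1 - μ) * ((1 - (1 - μ) ^ m) * M + Λ / μ) :=
            mul_le_mul_of_nonneg_left ih1 h1μ.le
          nlinarith [hsub0, hi, hmul]
        · rw [Real.sInf_of_not_bddBelow hbb] at hsub0
          nlinarith [hsub0]
      · have := hout _ hc0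
        have h1 : (1 - μ) ^ (m + 1) ≤ 1 := pow_le_one₀ h1μ.le (by linarith)
        nlinarith
  -- conclude
  have hall : ∀ x, u x ≤ (1 - (1 - μ) ^ d) * M + Λ / μ := by
    intro x
    by_cases hx : x ∈ Y
    · obtain ⟨m, hmd, c, hc0, hcm, hch⟩ := hchain x hx
      have hk := key m c hcm hch
      rw [hc0] at hk
      have hpd : (1 - μ) ^ d ≤ (1 - μ) ^ m :=
        pow_le_pow_of_le_one h1μ.le (by linarith) (by omega)
      nlinarith
    · have := hout _ hx
      have h1 : (1 - μ) ^ d ≤ 1 := pow_le_one₀ h1μ.le (by linarith)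
      nlinarith
  have hMle : M ≤ (1 - (1 - μ) ^ d) * M + Λ / μ := by
    apply csSup_le hne
    rintro v ⟨x, rfl⟩
    exact hall x
  have hpd0 : 0 < (1 - μ) ^ d := pow_pos h1μ d
  rw [← div_div, le_div_iff₀ hpd0]
  nlinarith
end

section
/- In the admissible setup with finite diameter $d$, let $\mu \in (0,1)$, $\Lambda > 0$. If $u: X \to \mathbb{R}$ satisfies $\inf_X u > -\infty$, $u(x) \ge \mu \sup_{B(x)} u + (1-\mu)\inf_X u - \Lambda$ for all $x \in Y$, and $u(x) \ge -\Lambda$ for $x \in X \setminus Y$, then $\inf_X u \ge -C$ for a constant $C$ depending only on $\mu$, $\Lambda$, $d$. -/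
/-- Boundedness of supersolutions (Theorem 3.1(iii)): in an admissible setup of
"diameter" `d`, any `u` with `inf_X u > -∞` satisfying
`u(x) ≥ μ sup_{B(x)} u + (1-μ) inf_X u - Λ` on `Y` and `u ≥ -Λ` off `Y`
satisfies `inf_X u ≥ -C` for a constant `C = C(μ,Λ,d)`. -/
theorem boundedness_supersolution (μ Λ : ℝ) (hμ0 : 0 < μ) (hμ1 : μ < 1) (hΛ : 0 < Λ)
    (d : ℕ) :
    ∃ C : ℝ, 0 < C ∧ ∀ (X : Type) (Y : Set X) (B : X → Set X),
      Y.Nonempty → Yᶜ.Nonempty → (∀ x ∈ Y, (B x).Nonempty) →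
      (∀ x ∈ Y, ∃ m < d, ∃ c : ℕ → X, c 0 = x ∧ c m ∉ Y ∧
        ∀ i, 1 ≤ i → i ≤ m → c i ∈ B (c (i - 1))) →
      ∀ u : X → ℝ,
        BddBelow (Set.range u) →
        (∀ x ∈ Y, μ * sSup (u '' B x) + (1 - μ) * sInf (Set.range u) - Λ ≤ u x) →
        (∀ x ∉ Y, -Λ ≤ u x) →
        -C ≤ sInf (Set.range u) := by
  set t : ℕ → ℝ := fun i => ((i : ℝ) + 2) * Λ / μ ^ i with ht
  have htpos : ∀ i, 0 < t i := by
    intro i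
    have : (0:ℝ) < μ ^ i := pow_pos hμ0 i
    have : (0:ℝ) < ((i:ℝ) + 2) * Λ := by positivity
    rw [ht]
    positivity
  have htmono : ∀ i j, i ≤ j → t i ≤ t j := by
    intro i j hij
    have h2 : (0:ℝ) < μ ^ j := pow_pos hμ0 j
    have hpow : μ ^ j ≤ μ ^ i := pow_le_pow_of_le_one hμ0.le hμ1.le hij
    have hci : (i:ℝ) ≤ j := Nat.cast_le.mpr hij
    simp only [ht]
    gcongr
    all_goals linarith
  have hstep : ∀ n, t n + Λ ≤ μ * t (n + 1) := by
    intro n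
    have hp : (0:ℝ) < μ ^ n := pow_pos hμ0 n
    have hμn1 : μ ^ n ≤ 1 := pow_le_one₀ hμ0.le hμ1.le
    have hΛμ : Λ * μ ^ n ≤ Λ := by nlinarith
    have key : μ * t (n + 1) = ((n:ℝ) + 3) * Λ / μ ^ n := by
      simp only [ht]
      push_cast
      rw [pow_succ]
      field_simp
      ring
    rw [key]
    simp only [ht]
    rw [div_add' _ _ _ hp.ne', div_le_div_iff₀ hp hp]
    nlinarith [hp, hΛμ]
  set C := (Λ + t d) / μ with hC
  have hCbig : Λ + t d ≤ C := by
    rw [hC, le_div_iff₀ hμ0]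
    nlinarith [htpos d]
  have hCpos : 0 < C := by
    have := htpos d
    rw [hC]; positivity
  refine ⟨C, hCpos, ?_⟩
  intro X Y B hYne hYcne hBne hchain u hbdd hsuper hout
  obtain ⟨y0, hy0⟩ := hYne
  have hXne : Nonempty X := ⟨y0⟩
  set I := sInf (Set.range u) with hI
  have hrange : (Set.range u).Nonempty := Set.range_nonempty u
  have hIle : ∀ y, I ≤ u y := fun y => csInf_le hbdd ⟨y, rfl⟩
  obtain ⟨_, ⟨x₀, rfl⟩, hx₀⟩ :=
    exists_lt_of_csInf_lt hrange (show I < I + Λ by linarith)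
  by_cases hx₀Y : x₀ ∈ Y
  · obtain ⟨m, hm, c, hc0, hcm, hcstep⟩ := hchain x₀ hx₀Y
    have key : ∀ i, i ≤ m → -C ≤ I ∨ (c i ∈ Y ∧ u (c i) ≤ I + t i) := by
      intro i
      induction i with
      | zero =>
        intro _
        right
        refine ⟨hc0 ▸ hx₀Y, ?_⟩
        have ht0 : t 0 = 2 * Λ := by simp only [ht]; norm_num
        rw [hc0, ht0]
        linarith
      | succ n ih =>
        intro hle
        rcases ih (Nat.le_of_succ_le hle) with h | ⟨hcY, hcu⟩
        · exact Or.inl h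
        · have hs := hsuper (c n) hcY
          have hnd : n + 1 ≤ d := le_trans hle hm.le
          by_cases hbA : BddAbove (u '' B (c n))
          · have hmem : c (n + 1) ∈ B (c n) := by
              have := hcstep (n + 1) (Nat.le_add_left 1 n) hle
              simpa using this
            have hle2 : u (c (n + 1)) ≤ sSup (u '' B (c n)) :=
              le_csSup hbA ⟨_, hmem, rfl⟩
            have hbound : u (c (n + 1)) ≤ I + t (n + 1) := by
              have h1 : μ * sSup (u '' B (c n)) ≤ μ * (I + t (n + 1)) := by
                have := hstep n
                nlinarith
              nlinarith [le_of_mul_le_mul_left h1 hμ0]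
            by_cases hY2 : c (n + 1) ∈ Y
            · exact Or.inr ⟨hY2, hbound⟩
            · left
              have hΛle := hout _ hY2
              have h3 : t (n + 1) ≤ t d := htmono _ _ hnd
              linarith
          · left
            rw [Real.sSup_of_not_bddAbove hbA] at hs
            have h3 : t n ≤ t d := htmono _ _ (by omega)
            have h4 : -I ≤ (Λ + t n) / μ := by
              rw [le_div_iff₀ hμ0]
              nlinarith
            have h5 : (Λ + t n) / μ ≤ C := by
              rw [hC]
              gcongr
              all_goals linarith
            linarith
    rcases key m le_rfl with h | ⟨hcY, _⟩
    · exact h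
    · exact absurd hcY hcm
  · have h1 := hout x₀ hx₀Y
    have h2 : 2 * Λ ≤ C := by
      have := htmono 0 d (Nat.zero_le d)
      have ht0 : t 0 = 2 * Λ := by simp only [ht]; norm_num
      linarith
    linarith
end

section
/- Define $u_0: \mathbb{R} \to \mathbb{R}$ by $u_0 = 0$ on $(-\infty,0]$, $u_0 = 4$ on $(0,1)$, $u_0(1) = 6$, $u_0 = 8$ on $(1,2)$, $u_0 = 12$ on $[2,\infty)$. Then for every $x \in (0,2)$, $u_0(x) = \tfrac{1}{2}\sup_{(x-1,x+1)} u_0 + \tfrac{1}{2}\inf_{(x-1,x+1)} u_0$, so $u_0$ is a discontinuous solution of the tug-of-war DPP with $f \equiv 0$ on $Y = (0,2)$, $\mu = 1/2$, $\varepsilon = 1$. -/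
/-- The function of Example 1.1 (case `f ≡ 0`): `0` on `(-∞,0]`, `4` on `(0,1)`,
`6` at `1`, `8` on `(1,2)`, `12` on `[2,∞)`. -/
noncomputable def u₀ (x : ℝ) : ℝ :=
  if x ≤ 0 then 0
  else if x < 1 then 4
  else if x = 1 then 6
  else if x < 2 then 8
  else 12

lemma u₀_mem_image {x t : ℝ} (h1 : x - 1 < t) (h2 : t < x + 1) :
    u₀ t ∈ u₀ '' Set.Ioo (x - 1) (x + 1) := ⟨t, ⟨h1, h2⟩, rfl⟩

/-- `u₀` is a discontinuous solution of the tug-of-war DPP with `f ≡ 0`,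
`Y = (0,2)`, `μ = 1/2`, `ε = 1`:
`u₀(x) = ½ sup_{(x-1,x+1)} u₀ + ½ inf_{(x-1,x+1)} u₀` for all `x ∈ (0,2)`. -/
theorem u₀_solves_dpp :
    (∀ x ∈ Set.Ioo (0 : ℝ) 2,
      u₀ x = (1 / 2) * sSup (u₀ '' Set.Ioo (x - 1) (x + 1)) +
        (1 / 2) * sInf (u₀ '' Set.Ioo (x - 1) (x + 1))) ∧
    ¬ Continuous u₀ := by
  constructor
  · rintro x ⟨hx0, hx2⟩
    rcases lt_trichotomy x 1 with h1 | h1 | h1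
    · -- x ∈ (0,1): sup = 8, inf = 0
      have hsup : IsGreatest (u₀ '' Set.Ioo (x - 1) (x + 1)) 8 := by
        constructor
        · have hm := u₀_mem_image (x := x) (t := (x + 2) / 2)
            (by linarith) (by linarith)
          have hv : u₀ ((x + 2) / 2) = 8 := by
            unfold u₀; split_ifs <;> (try push_neg at *) <;> linarith
          rwa [hv] at hm
        · rintro y ⟨t, ⟨ht1, ht2⟩, rfl⟩
          unfold u₀; split_ifs <;> (try push_neg at *) <;> linarith
      have hinf : IsLeast (u₀ '' Set.Ioo (x - 1) (x + 1)) 0 := by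
        constructor
        · have hm := u₀_mem_image (x := x) (t := (x - 1) / 2)
            (by linarith) (by linarith)
          have hv : u₀ ((x - 1) / 2) = 0 := by
            unfold u₀; split_ifs <;> (try push_neg at *) <;> linarith
          rwa [hv] at hm
        · rintro y ⟨t, ⟨ht1, ht2⟩, rfl⟩
          unfold u₀; split_ifs <;> (try push_neg at *) <;> linarith
      rw [hsup.csSup_eq, hinf.csInf_eq]
      have hv : u₀ x = 4 := by
        unfold u₀; split_ifs <;> (try push_neg at *) <;> linarith
      rw [hv]; norm_num
    · -- x = 1: sup = 8, inf = 4
      subst h1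
      have hsup : IsGreatest (u₀ '' Set.Ioo ((1 : ℝ) - 1) (1 + 1)) 8 := by
        constructor
        · have hm := u₀_mem_image (x := (1 : ℝ)) (t := 3 / 2)
            (by norm_num) (by norm_num)
          have hv : u₀ (3 / 2) = 8 := by
            unfold u₀; split_ifs <;> (try push_neg at *) <;> linarith
          rwa [hv] at hm
        · rintro y ⟨t, ⟨ht1, ht2⟩, rfl⟩
          unfold u₀; split_ifs <;> (try push_neg at *) <;> linarith
      have hinf : IsLeast (u₀ '' Set.Ioo ((1 : ℝ) - 1) (1 + 1)) 4 := by
        constructor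
        · have hm := u₀_mem_image (x := (1 : ℝ)) (t := 1 / 2)
            (by norm_num) (by norm_num)
          have hv : u₀ (1 / 2) = 4 := by
            unfold u₀; split_ifs <;> (try push_neg at *) <;> linarith
          rwa [hv] at hm
        · rintro y ⟨t, ⟨ht1, ht2⟩, rfl⟩
          unfold u₀; split_ifs <;> (try push_neg at *) <;> linarith
      rw [hsup.csSup_eq, hinf.csInf_eq]
      have hv : u₀ 1 = 6 := by unfold u₀; norm_num
      rw [hv]; norm_num
    · -- x ∈ (1,2): sup = 12, inf = 4
      have hsup : IsGreatest (u₀ '' Set.Ioo (x - 1) (x + 1)) 12 := by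
        constructor
        · have hm := u₀_mem_image (x := x) (t := (x + 3) / 2)
            (by linarith) (by linarith)
          have hv : u₀ ((x + 3) / 2) = 12 := by
            unfold u₀; split_ifs <;> (try push_neg at *) <;> linarith
          rwa [hv] at hm
        · rintro y ⟨t, ⟨ht1, ht2⟩, rfl⟩
          unfold u₀; split_ifs <;> (try push_neg at *) <;> linarith
      have hinf : IsLeast (u₀ '' Set.Ioo (x - 1) (x + 1)) 4 := by
        constructor
        · have hm := u₀_mem_image (x := x) (t := x / 2)
            (by linarith) (by linarith)
          have hv : u₀ (x / 2) = 4 := by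
            unfold u₀; split_ifs <;> (try push_neg at *) <;> linarith
          rwa [hv] at hm
        · rintro y ⟨t, ⟨ht1, ht2⟩, rfl⟩
          unfold u₀; split_ifs <;> (try push_neg at *) <;> linarith
      rw [hsup.csSup_eq, hinf.csInf_eq]
      have hv : u₀ x = 8 := by
        unfold u₀; split_ifs <;> (try push_neg at *) <;> linarith
      rw [hv]; norm_num
  · intro hc
    have h0 : u₀ 0 = 0 := by unfold u₀; norm_num
    have h1 : u₀ 1 = 6 := by unfold u₀; norm_num
    have := intermediate_value_Icc (by norm_num : (0 : ℝ) ≤ 1) hc.continuousOn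
    have h2 : (2 : ℝ) ∈ u₀ '' Set.Icc 0 1 := by
      apply this
      rw [h0, h1]; constructor <;> norm_num
    obtain ⟨t, _, ht⟩ := h2
    unfold u₀ at ht; split_ifs at ht <;> norm_num at ht
end

section
/- Suppose the DPP iteration converges uniformly to a solution $u$ from any bounded initial function. Let $\underline{v}$ be a bounded subsolution and $\bar{v}$ a bounded supersolution (with the same boundary data $F$ and running cost $f$, $\inf_Y f > 0$, $\sup|F| + \sup|f| < \infty$). Then $\underline{v}(x) \le \bar{v}(x)$ for every $x \in X$. -/
open Classical in
noncomputable def dppT {X : Type} (Y : Set X) (B : X → Set X) (μ : ℝ)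
    (f F : X → ℝ) (v : X → ℝ) : X → ℝ :=
  fun x => if x ∈ Y then μ * sSup (v '' B x) + (1 - μ) * sInf (v '' B x) + f x else F x

lemma abs_sSup_image_le {X : Type} {v : X → ℝ} {M : ℝ} (hM : ∀ x, |v x| ≤ M)
    {s : Set X} (hs : s.Nonempty) : |sSup (v '' s)| ≤ M := by
  obtain ⟨y, hy⟩ := hs
  have hbdd : BddAbove (v '' s) := ⟨M, by rintro a ⟨z, _, rfl⟩; exact (abs_le.1 (hM z)).2⟩
  rw [abs_le]
  constructor
  · exact le_trans (abs_le.1 (hM y)).1 (le_csSup hbdd ⟨y, hy, rfl⟩)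
  · exact csSup_le ⟨v y, y, hy, rfl⟩ (by rintro a ⟨z, _, rfl⟩; exact (abs_le.1 (hM z)).2)

lemma abs_sInf_image_le {X : Type} {v : X → ℝ} {M : ℝ} (hM : ∀ x, |v x| ≤ M)
    {s : Set X} (hs : s.Nonempty) : |sInf (v '' s)| ≤ M := by
  obtain ⟨y, hy⟩ := hs
  have hbdd : BddBelow (v '' s) := ⟨-M, by rintro a ⟨z, _, rfl⟩; exact (abs_le.1 (hM z)).1⟩
  rw [abs_le]
  constructor
  · exact le_csInf ⟨v y, y, hy, rfl⟩ (by rintro a ⟨z, _, rfl⟩; exact (abs_le.1 (hM z)).1)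
  · exact le_trans (csInf_le hbdd ⟨y, hy, rfl⟩) (abs_le.1 (hM y)).2

lemma dppT_bounded {X : Type} {Y : Set X} {B : X → Set X} {μ : ℝ}
    {f F : X → ℝ} {v : X → ℝ}
    (hF : ∃ M, ∀ x, |F x| ≤ M) (hf : ∃ M, ∀ x, |f x| ≤ M)
    (hμ0 : 0 < μ) (hμ1 : μ < 1) (hB : ∀ x ∈ Y, (B x).Nonempty)
    (hv : ∃ M, ∀ x, |v x| ≤ M) :
    ∃ M, ∀ x, |dppT Y B μ f F v x| ≤ M := by
  obtain ⟨MF, hMF⟩ := hF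
  obtain ⟨Mf, hMf⟩ := hf
  obtain ⟨Mv, hMv⟩ := hv
  refine ⟨max (Mv + Mf) MF, fun x => ?_⟩
  unfold dppT
  by_cases hx : x ∈ Y
  · rw [if_pos hx]
    refine le_trans ?_ (le_max_left _ _)
    have h1 : |sSup (v '' B x)| ≤ Mv := abs_sSup_image_le hMv (hB x hx)
    have h2 : |sInf (v '' B x)| ≤ Mv := abs_sInf_image_le hMv (hB x hx)
    calc |μ * sSup (v '' B x) + (1 - μ) * sInf (v '' B x) + f x|
        ≤ |μ * sSup (v '' B x) + (1 - μ) * sInf (v '' B x)| + |f x| := abs_add_le _ _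
      _ ≤ (|μ * sSup (v '' B x)| + |(1 - μ) * sInf (v '' B x)|) + Mf := by
          gcongr; exacts [abs_add_le _ _, hMf x]
      _ ≤ (μ * Mv + (1 - μ) * Mv) + Mf := by
          rw [abs_mul, abs_mul, abs_of_pos hμ0, abs_of_pos (by linarith : (0:ℝ) < 1 - μ)]
          nlinarith [abs_nonneg (sSup (v '' B x)), abs_nonneg (sInf (v '' B x))]
      _ = Mv + Mf := by ring
  · rw [if_neg hx]
    exact le_trans (hMF x) (le_max_right _ _)

lemma dppT_mono {X : Type} {Y : Set X} {B : X → Set X} {μ : ℝ}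
    {f F : X → ℝ} {v w : X → ℝ}
    (hμ0 : 0 < μ) (hμ1 : μ < 1) (hB : ∀ x ∈ Y, (B x).Nonempty)
    (hv : ∃ M, ∀ x, |v x| ≤ M) (hw : ∃ M, ∀ x, |w x| ≤ M)
    (hvw : ∀ x, v x ≤ w x) :
    ∀ x, dppT Y B μ f F v x ≤ dppT Y B μ f F w x := by
  intro x
  unfold dppT
  by_cases hx : x ∈ Y
  · rw [if_pos hx, if_pos hx]
    obtain ⟨Mv, hMv⟩ := hv
    obtain ⟨Mw, hMw⟩ := hw
    have hwbdd : BddAbove (w '' B x) := ⟨Mw, by rintro a ⟨z, _, rfl⟩; exact (abs_le.1 (hMw z)).2⟩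
    have hvbdd : BddBelow (v '' B x) := ⟨-Mv, by rintro a ⟨z, _, rfl⟩; exact (abs_le.1 (hMv z)).1⟩
    have hne := hB x hx
    have h1 : sSup (v '' B x) ≤ sSup (w '' B x) := by
      refine csSup_le ⟨v hne.choose, hne.choose, hne.choose_spec, rfl⟩ ?_
      rintro a ⟨z, hz, rfl⟩
      exact le_trans (hvw z) (le_csSup hwbdd ⟨z, hz, rfl⟩)
    have h2 : sInf (v '' B x) ≤ sInf (w '' B x) := by
      refine le_csInf ⟨w hne.choose, hne.choose, hne.choose_spec, rfl⟩ ?_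
      rintro a ⟨z, hz, rfl⟩
      exact le_trans (csInf_le hvbdd ⟨z, hz, rfl⟩) (hvw z)
    nlinarith
  · rw [if_neg hx, if_neg hx]

/-- Comparison principle (Corollary 1.2): if the DPP iteration converges
uniformly to one and the same solution from every bounded starting function,
then every bounded subsolution lies below every bounded supersolution. -/
theorem dpp_comparison (X : Type) (Y : Set X) (B : X → Set X) (μ : ℝ)
    (hμ0 : 0 < μ) (hμ1 : μ < 1) (d : ℕ)
    (hY : Y.Nonempty) (hYc : Yᶜ.Nonempty) (hB : ∀ x ∈ Y, (B x).Nonempty)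
    (hchain : ∀ x ∈ Y, ∃ m < d, ∃ c : ℕ → X, c 0 = x ∧ c m ∉ Y ∧
      ∀ i, 1 ≤ i → i ≤ m → c i ∈ B (c (i - 1)))
    (f F : X → ℝ)
    (hF : ∃ M, ∀ x, |F x| ≤ M) (hf : ∃ M, ∀ x, |f x| ≤ M)
    (hfpos : ∃ lam > (0 : ℝ), ∀ x ∈ Y, lam ≤ f x)
    -- the iteration converges uniformly to a fixed limit from any bounded start:
    (hconv : ∃ u : X → ℝ, ∀ v : ℕ → X → ℝ,
      (∃ M, ∀ x, |v 0 x| ≤ M) →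
      (∀ k, ∀ x ∈ Y,
        v (k + 1) x = μ * sSup (v k '' B x) + (1 - μ) * sInf (v k '' B x) + f x) →
      (∀ k, ∀ x ∉ Y, v (k + 1) x = F x) →
      TendstoUniformly (fun k => v k) u Filter.atTop)
    -- a bounded subsolution:
    (vlow : X → ℝ) (hvlowbd : ∃ M, ∀ x, |vlow x| ≤ M)
    (hvlowsub : ∀ x ∈ Y,
      vlow x ≤ μ * sSup (vlow '' B x) + (1 - μ) * sInf (vlow '' B x) + f x)
    (hvlowF : ∀ x ∉ Y, vlow x = F x)
    -- a bounded supersolution: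
    (vup : X → ℝ) (hvupbd : ∃ M, ∀ x, |vup x| ≤ M)
    (hvupsuper : ∀ x ∈ Y,
      μ * sSup (vup '' B x) + (1 - μ) * sInf (vup '' B x) + f x ≤ vup x)
    (hvupF : ∀ x ∉ Y, vup x = F x) :
    ∀ x, vlow x ≤ vup x := by
  obtain ⟨u, hu⟩ := hconv
  set T := dppT Y B μ f F with hT
  -- iteration from below
  set a : ℕ → X → ℝ := fun k => T^[k] vlow with ha
  set b : ℕ → X → ℝ := fun k => T^[k] vup with hb
  have ha0 : a 0 = vlow := rfl
  have hb0 : b 0 = vup := rfl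
  have hastep : ∀ k, a (k + 1) = T (a k) := fun k => Function.iterate_succ_apply' T k vlow
  have hbstep : ∀ k, b (k + 1) = T (b k) := fun k => Function.iterate_succ_apply' T k vup
  have habd : ∀ k, ∃ M, ∀ x, |a k x| ≤ M := by
    intro k; induction k with
    | zero => exact hvlowbd
    | succ n ih => rw [hastep]; exact dppT_bounded hF hf hμ0 hμ1 hB ih
  have hbbd : ∀ k, ∃ M, ∀ x, |b k x| ≤ M := by
    intro k; induction k with
    | zero => exact hvupbd
    | succ n ih => rw [hbstep]; exact dppT_bounded hF hf hμ0 hμ1 hB ih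
  -- monotone up
  have haseq : ∀ k x, a k x ≤ a (k + 1) x := by
    intro k; induction k with
    | zero =>
      intro x
      rw [hastep 0, ha0]
      show vlow x ≤ T vlow x
      unfold T; unfold dppT
      by_cases hx : x ∈ Y
      · rw [if_pos hx]; exact hvlowsub x hx
      · rw [if_neg hx]; exact le_of_eq (hvlowF x hx)
    | succ n ih =>
      intro x
      calc a (n+1) x = T (a n) x := congrFun (hastep n) x
        _ ≤ T (a (n+1)) x := dppT_mono hμ0 hμ1 hB (habd n) (habd (n+1)) ih x
        _ = a (n+2) x := (congrFun (hastep (n+1)) x).symm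
  have hbseq : ∀ k x, b (k + 1) x ≤ b k x := by
    intro k; induction k with
    | zero =>
      intro x
      rw [hbstep 0, hb0]
      show T vup x ≤ vup x
      unfold T; unfold dppT
      by_cases hx : x ∈ Y
      · rw [if_pos hx]; exact hvupsuper x hx
      · rw [if_neg hx]; exact le_of_eq (hvupF x hx).symm
    | succ n ih =>
      intro x
      calc b (n+2) x = T (b (n+1)) x := congrFun (hbstep (n+1)) x
        _ ≤ T (b n) x := dppT_mono hμ0 hμ1 hB (hbbd (n+1)) (hbbd n) ih x
        _ = b (n+1) x := (congrFun (hbstep n) x).symm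
  have halow : ∀ k x, vlow x ≤ a k x := by
    intro k; induction k with
    | zero => intro x; exact le_of_eq rfl
    | succ n ih => intro x; exact le_trans (ih x) (haseq n x)
  have hbup : ∀ k x, b k x ≤ vup x := by
    intro k; induction k with
    | zero => intro x; exact le_of_eq rfl
    | succ n ih => intro x; exact le_trans (hbseq n x) (ih x)
  -- both iterations satisfy the convergence hypothesis
  have harec : ∀ k, ∀ x ∈ Y,
      a (k + 1) x = μ * sSup (a k '' B x) + (1 - μ) * sInf (a k '' B x) + f x := by
    intro k x hx; rw [hastep]; unfold T; unfold dppT; first | rw [if_pos hx] | rw [if_neg hx]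
  have haF : ∀ k, ∀ x ∉ Y, a (k + 1) x = F x := by
    intro k x hx; rw [hastep]; unfold T; unfold dppT; first | rw [if_pos hx] | rw [if_neg hx]
  have hbrec : ∀ k, ∀ x ∈ Y,
      b (k + 1) x = μ * sSup (b k '' B x) + (1 - μ) * sInf (b k '' B x) + f x := by
    intro k x hx; rw [hbstep]; unfold T; unfold dppT; first | rw [if_pos hx] | rw [if_neg hx]
  have hbF : ∀ k, ∀ x ∉ Y, b (k + 1) x = F x := by
    intro k x hx; rw [hbstep]; unfold T; unfold dppT; first | rw [if_pos hx] | rw [if_neg hx]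
  have hac := hu a hvlowbd harec haF
  have hbc := hu b hvupbd hbrec hbF
  intro x
  have hax : Filter.Tendsto (fun k => a k x) Filter.atTop (nhds (u x)) :=
    hac.tendsto_at x
  have hbx : Filter.Tendsto (fun k => b k x) Filter.atTop (nhds (u x)) :=
    hbc.tendsto_at x
  have h1 : vlow x ≤ u x :=
    ge_of_tendsto hax (Filter.Eventually.of_forall fun k => halow k x)
  have h2 : u x ≤ vup x :=
    le_of_tendsto hbx (Filter.Eventually.of_forall fun k => hbup k x)
  linarith
end

section
/- Let $(X,d)$ be a metric space of finite diameter, $Y \subsetneq X$ nonempty and proper, $\varepsilon > 0$, and suppose every $x \in Y$ is connected to $X\setminus Y$ by a chain of at most $N$ steps of size less than $\varepsilon$ (e.g., $N \ge \mathrm{diam}(X)/\varepsilon + 2$ when such chains exist). Let $\mu \in (0,1)$, $f: Y\to\mathbb{R}$, $F: X\setminus Y\to\mathbb{R}$ with $\sup|F| + \sup|f| < \infty$ and $\inf_Y f > 0$. Then any two bounded functions $u, \tilde u: X\to\mathbb{R}$ both satisfying $u(x) = \mu\sup_{B_\varepsilon(x)} u + (1-\mu)\inf_{B_\varepsilon(x)}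 u + f(x)$ on $Y$ and $u = F$ on $X\setminus Y$ coincide: $u = \tilde u$. -/
private lemma dpp_le_aux {X : Type} [MetricSpace X]
    (Y : Set X) (ε : ℝ) (hε : 0 < ε)
    (μ : ℝ) (hμ0 : 0 < μ) (hμ1 : μ < 1)
    (f F : X → ℝ) (M : ℝ) (hM : ∀ x, |F x| ≤ M)
    (lam : ℝ) (hlam : 0 < lam) (hfl : ∀ x ∈ Y, lam ≤ f x)
    (u v : X → ℝ) (Mu : ℝ) (hMu : ∀ x, |u x| ≤ Mu)
    (Mv : ℝ) (hMv : ∀ x, |v x| ≤ Mv)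
    (hu : ∀ x ∈ Y, u x = μ * sSup (u '' Metric.ball x ε) +
      (1 - μ) * sInf (u '' Metric.ball x ε) + f x)
    (huF : ∀ x ∉ Y, u x = F x)
    (hv : ∀ x ∈ Y, v x = μ * sSup (v '' Metric.ball x ε) +
      (1 - μ) * sInf (v '' Metric.ball x ε) + f x)
    (hvF : ∀ x ∉ Y, v x = F x)
    (x : X) : u x ≤ v x := by
  have hM0 : 0 ≤ M := le_trans (abs_nonneg _) (hM x)
  have hMu0 : 0 ≤ Mu := le_trans (abs_nonneg _) (hMu x)
  -- key estimate for each t ∈ (0,1)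
  have key : ∀ t : ℝ, 0 < t → t < 1 → t * u x - v x ≤ (1 - t) * M := by
    intro t ht0 ht1
    have hbdd : BddAbove (Set.range fun y => t * u y - v y) := by
      refine ⟨Mu + Mv, ?_⟩
      rintro _ ⟨y, rfl⟩
      have h1 := (abs_le.1 (hMu y)).2
      have h2 := (abs_le.1 (hMv y)).1
      have h3 := mul_le_mul_of_nonneg_left h1 ht0.le
      have h4 : t * Mu ≤ Mu := by nlinarith
      show t * u y - v y ≤ Mu + Mv
      linarith
    set S := sSup (Set.range fun y => t * u y - v y) with hSdef
    have hS : ∀ y, t * u y - v y ≤ S := fun y => le_csSup hbdd ⟨y, rfl⟩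
    have hrne : (Set.range fun y => t * u y - v y).Nonempty := ⟨t * u x - v x, x, rfl⟩
    -- interior estimate
    have hYb : ∀ z ∈ Y, t * u z - v z ≤ S - (1 - t) * lam := by
      intro z hz
      have hzB : z ∈ Metric.ball z ε := Metric.mem_ball_self hε
      have hune : (u '' Metric.ball z ε).Nonempty := ⟨u z, z, hzB, rfl⟩
      have hvne : (v '' Metric.ball z ε).Nonempty := ⟨v z, z, hzB, rfl⟩
      have hubb : BddAbove (u '' Metric.ball z ε) := by
        refine ⟨Mu, ?_⟩; rintro _ ⟨y, _, rfl⟩; exact (abs_le.1 (hMu y)).2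
      have hulb : BddBelow (u '' Metric.ball z ε) := by
        refine ⟨-Mu, ?_⟩; rintro _ ⟨y, _, rfl⟩; exact (abs_le.1 (hMu y)).1
      have hvbb : BddAbove (v '' Metric.ball z ε) := by
        refine ⟨Mv, ?_⟩; rintro _ ⟨y, _, rfl⟩; exact (abs_le.1 (hMv y)).2
      have hvlb : BddBelow (v '' Metric.ball z ε) := by
        refine ⟨-Mv, ?_⟩; rintro _ ⟨y, _, rfl⟩; exact (abs_le.1 (hMv y)).1
      have claim1 : t * sSup (u '' Metric.ball z ε) - sSup (v '' Metric.ball z ε) ≤ S := by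
        have h1 : sSup (u '' Metric.ball z ε) ≤ (S + sSup (v '' Metric.ball z ε)) / t := by
          apply csSup_le hune
          rintro _ ⟨y, hyB, rfl⟩
          rw [le_div_iff₀ ht0]
          have h2 : v y ≤ sSup (v '' Metric.ball z ε) := le_csSup hvbb ⟨y, hyB, rfl⟩
          have := hS y
          nlinarith
        have h2 := (le_div_iff₀ ht0).1 h1
        nlinarith
      have claim2 : t * sInf (u '' Metric.ball z ε) - sInf (v '' Metric.ball z ε) ≤ S := by
        apply le_of_forall_pos_le_add
        intro η hη
        obtain ⟨a, ⟨y, hyB, rfl⟩, hya⟩ :=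
          exists_lt_of_csInf_lt hvne (lt_add_of_pos_right (sInf (v '' Metric.ball z ε)) hη)
        have h3 : sInf (u '' Metric.ball z ε) ≤ u y := csInf_le hulb ⟨y, hyB, rfl⟩
        have h4 := mul_le_mul_of_nonneg_left h3 ht0.le
        have := hS y
        linarith
      have hfz := hfl z hz
      have e1 := hu z hz
      have e2 := hv z hz
      have c1 := mul_le_mul_of_nonneg_left claim1 hμ0.le
      have c2 := mul_le_mul_of_nonneg_left claim2 (by linarith : (0:ℝ) ≤ 1 - μ)
      have c3 := mul_le_mul_of_nonneg_left hfz (by linarith : (0:ℝ) ≤ 1 - t)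
      rw [e1, e2]
      nlinarith
    -- boundary estimate
    have hNYb : ∀ z, z ∉ Y → t * u z - v z ≤ (1 - t) * M := by
      intro z hz
      rw [huF z hz, hvF z hz]
      have h1 := (abs_le.1 (hM z)).1
      have h2 := mul_nonneg (by linarith : (0:ℝ) ≤ 1 - t) (by linarith : 0 ≤ F z + M)
      nlinarith
    have hSle : S ≤ (1 - t) * M := by
      have hmax : S ≤ max (S - (1 - t) * lam) ((1 - t) * M) := by
        apply csSup_le hrne
        rintro _ ⟨y, rfl⟩
        by_cases hy : y ∈ Y
        · exact le_max_of_le_left (hYb y hy)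
        · exact le_max_of_le_right (hNYb y hy)
      rcases le_max_iff.1 hmax with h | h
      · exfalso
        have := mul_pos (by linarith : (0:ℝ) < 1 - t) hlam
        linarith
      · exact h
    exact le_trans (hS x) hSle
  -- let t → 1
  by_contra hc
  push_neg at hc
  have ha : 0 < u x - v x := by linarith
  have hD : (0:ℝ) < M + Mu + 1 := by linarith
  set δ : ℝ := min (1/2) ((u x - v x) / (M + Mu + 1)) with hδdef
  have hδ0 : 0 < δ := lt_min (by norm_num) (div_pos ha hD)
  have hδh : δ ≤ 1/2 := min_le_left _ _
  have hδa : δ * (M + Mu + 1) ≤ u x - v x := by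
    have := min_le_right (1/2) ((u x - v x) / (M + Mu + 1))
    calc δ * (M + Mu + 1) ≤ ((u x - v x) / (M + Mu + 1)) * (M + Mu + 1) := by
          exact mul_le_mul_of_nonneg_right this (by linarith)
      _ = u x - v x := by field_simp
  have hk := key (1 - δ) (by linarith) (by linarith)
  have hux : δ * u x ≤ δ * Mu := mul_le_mul_of_nonneg_left (abs_le.1 (hMu x)).2 hδ0.le
  nlinarith

/-- Uniqueness for the metric-space tug-of-war DPP: in a metric space of finite
diameter, if every point of the domain `Y` is connected to the boundary
`X \ Y` by a chain of at most `N` steps of size `< ε`, and `F`, `f` are bounded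
with `inf_Y f > 0`, then bounded solutions of the DPP
`u(x) = μ sup_{B_ε(x)} u + (1-μ) inf_{B_ε(x)} u + f(x)` on `Y`, `u = F` off `Y`,
are unique. -/
theorem metric_dpp_uniqueness {X : Type} [MetricSpace X]
    (hdiam : Bornology.IsBounded (Set.univ : Set X))
    (Y : Set X) (hY : Y.Nonempty) (hYc : Yᶜ.Nonempty)
    (ε : ℝ) (hε : 0 < ε) (N : ℕ)
    (hchain : ∀ x ∈ Y, ∃ m ≤ N, ∃ c : ℕ → X, c 0 = x ∧ c m ∉ Y ∧
      ∀ i < m, dist (c (i + 1)) (c i) < ε)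
    (μ : ℝ) (hμ0 : 0 < μ) (hμ1 : μ < 1)
    (f F : X → ℝ) (hFf : ∃ M, ∀ x, |F x| + |f x| ≤ M)
    (hfpos : ∃ lam > (0 : ℝ), ∀ x ∈ Y, lam ≤ f x)
    (u v : X → ℝ)
    (hubd : ∃ M, ∀ x, |u x| ≤ M) (hvbd : ∃ M, ∀ x, |v x| ≤ M)
    (hu : ∀ x ∈ Y, u x = μ * sSup (u '' Metric.ball x ε) +
      (1 - μ) * sInf (u '' Metric.ball x ε) + f x)
    (huF : ∀ x ∉ Y, u x = F x)
    (hv : ∀ x ∈ Y, v x = μ * sSup (v '' Metric.ball x ε) +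
      (1 - μ) * sInf (v '' Metric.ball x ε) + f x)
    (hvF : ∀ x ∉ Y, v x = F x) :
    u = v := by
  obtain ⟨M, hMFf⟩ := hFf
  have hMF : ∀ x, |F x| ≤ M := fun x => le_trans (le_add_of_nonneg_right (abs_nonneg _)) (hMFf x)
  obtain ⟨lam, hlam, hfl⟩ := hfpos
  obtain ⟨Mu, hMu⟩ := hubd
  obtain ⟨Mv, hMv⟩ := hvbd
  funext x
  exact le_antisymm
    (dpp_le_aux Y ε hε μ hμ0 hμ1 f F M hMF lam hlam hfl u v Mu hMu Mv hMv hu huF hv hvF x)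
    (dpp_le_aux Y ε hε μ hμ0 hμ1 f F M hMF lam hlam hfl v u Mv hMv Mu hMu hv hvF hu huF x)
end
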